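/- arXiv:2502.05810 — 2 statements merged into one kernel-verified Lean document; each statement's English description precedes it below -/
import Mathlib

section
/- Let p_ℓ be a root of ϑ(o) + Θ(o) λ_ℓ = 0 with ϑ(o) = τo³ + o² + ω₀ o, Θ(o) = c²(τo+1) + δo, where τ > 0, c > 0, δ ≥ 0, ω₀ ≥ 0 and λ_ℓ → ∞. Then p_ℓ = i((c² + δ/τ)λ_ℓ + ω₀/τ)^{1/2} + O(ω₀^{1/2} λ_ℓ^{-1/4}) + O(δ^{1/2} λ_ℓ^{1/4}) as λ_ℓ → ∞; in particular 1/p_ℓ = O(λ_ℓ^{-1/2}) and p_ℓ² = -(c² + δ/τ)λ_ℓ - (ω₀/τ)(1 + O(λ_ℓ^{-1/2})) + O(δ λ_ℓ^{1/2}). -/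
open Filter Asymptotics Complex

lemma stmt3_extract (τ c δ ω₀ l : ℝ) (z : ℂ)
    (h : (τ : ℂ) * z ^ 3 + z ^ 2 + (ω₀ : ℂ) * z
        + (((c ^ 2 : ℝ) : ℂ) * ((τ : ℂ) * z + 1) + (δ : ℂ) * z) * (l : ℂ) = 0)
    (hb : 0 < z.im) :
    τ * z.im ^ 2 = 3 * τ * z.re ^ 2 + 2 * z.re + ω₀ + (c ^ 2 * τ + δ) * l ∧
    (2 * τ * z.re + 1) * (z.re ^ 2 + z.im ^ 2) = c ^ 2 * l := by
  have h1 := congrArg Complex.re h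
  have h2 := congrArg Complex.im h
  simp only [Complex.add_re, Complex.add_im, Complex.mul_re, Complex.mul_im,
    Complex.ofReal_re, Complex.ofReal_im, Complex.one_re, Complex.one_im,
    Complex.zero_re, Complex.zero_im, pow_succ, pow_zero, one_mul] at h1 h2
  have himE : τ * (3 * z.re ^ 2 - z.im ^ 2) + 2 * z.re + (ω₀ + (c ^ 2 * τ + δ) * l) = 0 := by
    have hy : z.im ≠ 0 := ne_of_gt hb
    have hmul : (τ * (3 * z.re ^ 2 - z.im ^ 2) + 2 * z.re + (ω₀ + (c ^ 2 * τ + δ) * l)) * z.im = 0 := by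
      linear_combination h2
    rcases mul_eq_zero.mp hmul with h' | h'
    · exact h'
    · exact absurd h' hy
  constructor
  · linear_combination (-1) * himE
  · linear_combination (-1) * h1 + z.re * himE

set_option maxHeartbeats 4000000 in
/-- asymptotics of the poles `p_ℓ`, i.e. of the roots of
`ϑ(o) + Θ(o)λ_ℓ = 0` with `ϑ(o) = τo³+o²+ω₀o`, `Θ(o) = c²(τo+1)+δo`, as `λ_ℓ → ∞`. -/
theorem stmt3 (τ c δ ω₀ : ℝ) (hτ : 0 < τ) (hc : 0 < c) (hδ : 0 ≤ δ) (hω₀ : 0 ≤ ω₀)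
    (lam : ℕ → ℝ) (hpos : ∀ ℓ, 0 < lam ℓ) (hlim : Tendsto lam atTop atTop)
    (p : ℕ → ℂ)
    (hroot : ∀ ℓ, (τ : ℂ) * (p ℓ) ^ 3 + (p ℓ) ^ 2 + (ω₀ : ℂ) * p ℓ
        + (((c ^ 2 : ℝ) : ℂ) * ((τ : ℂ) * p ℓ + 1) + (δ : ℂ) * p ℓ) * (lam ℓ : ℂ) = 0)
    (hbranch : ∀ ℓ, 0 < (p ℓ).im) (hp0 : ∀ ℓ, p ℓ ≠ 0) :
    (∃ e₁ e₂ : ℕ → ℂ,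
        (∀ ℓ, p ℓ = Complex.I * (Real.sqrt ((c ^ 2 + δ / τ) * lam ℓ + ω₀ / τ) : ℝ)
            + e₁ ℓ + e₂ ℓ) ∧
        e₁ =O[atTop] (fun ℓ => Real.sqrt ω₀ * (lam ℓ) ^ (-(1 : ℝ) / 4)) ∧
        e₂ =O[atTop] (fun ℓ => Real.sqrt δ * (lam ℓ) ^ ((1 : ℝ) / 4))) ∧
    ((fun ℓ => 1 / p ℓ) =O[atTop] fun ℓ => (lam ℓ) ^ (-(1 : ℝ) / 2)) ∧
    (∃ e₃ e₄ : ℕ → ℂ,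
        (∀ ℓ, (p ℓ) ^ 2 = -(((c ^ 2 + δ / τ) * lam ℓ : ℝ) : ℂ)
            - ((ω₀ / τ : ℝ) : ℂ) * (1 + e₃ ℓ) + e₄ ℓ) ∧
        e₃ =O[atTop] (fun ℓ => (lam ℓ) ^ (-(1 : ℝ) / 2)) ∧
        e₄ =O[atTop] (fun ℓ => δ * (lam ℓ) ^ ((1 : ℝ) / 2))) := by
  have hτ0 : τ ≠ 0 := ne_of_gt hτ
  have hc0 : c ≠ 0 := ne_of_gt hc
  -- abbreviations
  set A : ℕ → ℝ := fun ℓ => (c ^ 2 + δ / τ) * lam ℓ + ω₀ / τ with hAdef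
  set D : ℕ → ℝ := fun ℓ => 2 * τ * A ℓ + 8 * τ * ((p ℓ).re) ^ 2 + 8 * (p ℓ).re + 2 / τ with hDdef
  set s : ℕ → ℝ := fun ℓ => Real.sqrt (A ℓ) with hsdef
  clear_value A D s
  -- basic real identities
  have hb0 : ∀ ℓ, 0 < (p ℓ).im := hbranch
  have him : ∀ ℓ, τ * ((p ℓ).im) ^ 2
      = 3 * τ * ((p ℓ).re) ^ 2 + 2 * (p ℓ).re + ω₀ + (c ^ 2 * τ + δ) * lam ℓ :=
    fun ℓ => (stmt3_extract τ c δ ω₀ (lam ℓ) (p ℓ) (hroot ℓ) (hb0 ℓ)).1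
  have hre : ∀ ℓ, (2 * τ * (p ℓ).re + 1) * (((p ℓ).re) ^ 2 + ((p ℓ).im) ^ 2) = c ^ 2 * lam ℓ :=
    fun ℓ => (stmt3_extract τ c δ ω₀ (lam ℓ) (p ℓ) (hroot ℓ) (hb0 ℓ)).2
  have hAc : ∀ ℓ, c ^ 2 * lam ℓ ≤ A ℓ := by
    intro ℓ
    have h1 : 0 ≤ δ / τ * lam ℓ := mul_nonneg (div_nonneg hδ hτ.le) (hpos ℓ).le
    have h2 : 0 ≤ ω₀ / τ := div_nonneg hω₀ hτ.le
    simp only [hAdef]; nlinarith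
  have hA0 : ∀ ℓ, 0 < A ℓ := fun ℓ =>
    lt_of_lt_of_le (mul_pos (pow_pos hc 2) (hpos ℓ)) (hAc ℓ)
  have hDA : ∀ ℓ, 2 * τ * A ℓ ≤ D ℓ := by
    intro ℓ
    have key : 0 ≤ 8 * τ * ((p ℓ).re) ^ 2 + 8 * (p ℓ).re + 2 / τ := by
      have h1 : 8 * τ * ((p ℓ).re) ^ 2 + 8 * (p ℓ).re + 2 / τ
          = (2 / τ) * (2 * τ * (p ℓ).re + 1) ^ 2 := by field_simp; ring
      rw [h1]; positivity
    simp only [hDdef]; linarith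
  have hD0 : ∀ ℓ, 0 < D ℓ := fun ℓ =>
    lt_of_lt_of_le (mul_pos (by linarith : (0:ℝ) < 2 * τ) (hA0 ℓ)) (hDA ℓ)
  have haD : ∀ ℓ, (p ℓ).re * D ℓ = -(δ * lam ℓ + ω₀) / τ := by
    intro ℓ
    simp only [hDdef, hAdef]
    field_simp
    linear_combination (-(2 * τ * (p ℓ).re + 1)) * him ℓ + τ * hre ℓ
  have hb2 : ∀ ℓ, ((p ℓ).im) ^ 2 = A ℓ + (p ℓ).re * (3 * (p ℓ).re + 2 / τ) := by
    intro ℓ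
    simp only [hAdef]
    field_simp
    linear_combination him ℓ
  have hsA : ∀ ℓ, (s ℓ) ^ 2 = A ℓ := by
    intro ℓ; rw [hsdef]; exact Real.sq_sqrt (hA0 ℓ).le
  have hs0 : ∀ ℓ, 0 < s ℓ := by
    intro ℓ; rw [hsdef]; exact Real.sqrt_pos.mpr (hA0 ℓ)
  have haval : ∀ ℓ, (p ℓ).re = -(δ * lam ℓ + ω₀) / (τ * D ℓ) := by
    intro ℓ
    rw [← div_div, ← haD ℓ, mul_div_cancel_right₀ _ (hD0 ℓ).ne']
  -- constants for the bounds
  set Ca : ℝ := (δ + ω₀) / (2 * τ ^ 2 * c ^ 2) with hCadef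
  have hCa0 : 0 ≤ Ca := by simp only [hCadef]; positivity
  set CB : ℝ := (c ^ 2 + δ / τ + ω₀ / τ) + 3 * Ca ^ 2 + 2 * Ca / τ with hCBdef
  clear_value Ca CB
  have hCB0 : 0 ≤ CB := by
    have h1 : (0:ℝ) ≤ c ^ 2 + δ / τ + ω₀ / τ := by positivity
    have h2 : (0:ℝ) ≤ 3 * Ca ^ 2 := by positivity
    have h3 : (0:ℝ) ≤ 2 * Ca / τ := div_nonneg (by linarith) hτ.le
    simp only [hCBdef]; linarith
  have h3Ca0 : 0 ≤ 3 * Ca + 2 / τ := add_nonneg (by linarith) (by positivity)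
  -- the eventual quantitative bounds
  have key : ∀ᶠ ℓ in atTop, 1 ≤ lam ℓ ∧ |(p ℓ).re| ≤ Ca ∧
      (p ℓ).im ≤ Real.sqrt CB * Real.sqrt (lam ℓ) ∧
      c / 2 * Real.sqrt (lam ℓ) ≤ (p ℓ).im ∧
      c * Real.sqrt (lam ℓ) ≤ (p ℓ).im + s ℓ ∧
      2 * τ ^ 2 * c ^ 2 * lam ℓ ≤ τ * D ℓ := by
    filter_upwards [hlim.eventually_ge_atTop 1,
      hlim.eventually_ge_atTop (2 / (3 * τ ^ 2 * c ^ 2))] with ℓ h1 h2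
    have hl0 : 0 < lam ℓ := hpos ℓ
    have hsl1 : 1 ≤ Real.sqrt (lam ℓ) := by
      have := Real.sqrt_le_sqrt h1; rwa [Real.sqrt_one] at this
    have hτD : 2 * τ ^ 2 * c ^ 2 * lam ℓ ≤ τ * D ℓ := by
      have hh1 := mul_le_mul_of_nonneg_left (hDA ℓ) hτ.le
      have hh2 := mul_le_mul_of_nonneg_left (hAc ℓ) (by positivity : (0:ℝ) ≤ 2 * τ ^ 2)
      nlinarith
    have hτD0 : 0 < τ * D ℓ := mul_pos hτ (hD0 ℓ)
    have hnum : 0 ≤ δ * lam ℓ + ω₀ := add_nonneg (mul_nonneg hδ hl0.le) hω₀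
    have habs : |(p ℓ).re| ≤ Ca := by
      rw [haval ℓ, abs_div, abs_neg, _root_.abs_of_nonneg hnum, _root_.abs_of_pos hτD0]
      have hstep1 : (δ * lam ℓ + ω₀) / (τ * D ℓ)
          ≤ (δ * lam ℓ + ω₀) / (2 * τ ^ 2 * c ^ 2 * lam ℓ) := by
        calc (δ * lam ℓ + ω₀) / (τ * D ℓ) = (δ * lam ℓ + ω₀) * (1 / (τ * D ℓ)) := by ring
          _ ≤ (δ * lam ℓ + ω₀) * (1 / (2 * τ ^ 2 * c ^ 2 * lam ℓ)) :=
              mul_le_mul_of_nonneg_left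
                (one_div_le_one_div_of_le (by positivity) hτD) hnum
          _ = (δ * lam ℓ + ω₀) / (2 * τ ^ 2 * c ^ 2 * lam ℓ) := by ring
      have hstep2 : (δ * lam ℓ + ω₀) / (2 * τ ^ 2 * c ^ 2 * lam ℓ) ≤ Ca := by
        rw [hCadef, div_le_div_iff₀ (by positivity) (by positivity)]
        have hh : ω₀ * 1 ≤ ω₀ * lam ℓ := mul_le_mul_of_nonneg_left h1 hω₀
        nlinarith [hh, (by positivity : (0:ℝ) < 2 * τ ^ 2 * c ^ 2)]
      exact hstep1.trans hstep2
    have hxCa := abs_le.mp habs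
    have hbb : (p ℓ).im ≤ Real.sqrt CB * Real.sqrt (lam ℓ) := by
      have hAup : A ℓ ≤ (c ^ 2 + δ / τ + ω₀ / τ) * lam ℓ := by
        simp only [hAdef]
        have hh : ω₀ / τ * 1 ≤ ω₀ / τ * lam ℓ :=
          mul_le_mul_of_nonneg_left h1 (by positivity)
        nlinarith [hh]
      have h2τ : (0:ℝ) < 2 / τ := by positivity
      have hquad : (p ℓ).re * (3 * (p ℓ).re + 2 / τ) ≤ 3 * Ca ^ 2 + 2 * Ca / τ := by
        have hsq : (p ℓ).re ^ 2 ≤ Ca ^ 2 := sq_le_sq' hxCa.1 hxCa.2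
        have hlin : (p ℓ).re * (2 / τ) ≤ Ca * (2 / τ) :=
          mul_le_mul_of_nonneg_right hxCa.2 h2τ.le
        ring_nf
        ring_nf at hsq hlin
        linarith
      have hCBc : (0:ℝ) ≤ 3 * Ca ^ 2 + 2 * Ca / τ :=
        add_nonneg (by positivity) (div_nonneg (by linarith) hτ.le)
      have hbsq : (p ℓ).im ^ 2 ≤ CB * lam ℓ := by
        have hh := mul_le_mul_of_nonneg_left h1 hCBc
        calc (p ℓ).im ^ 2 = A ℓ + (p ℓ).re * (3 * (p ℓ).re + 2 / τ) := hb2 ℓ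
          _ ≤ (c ^ 2 + δ / τ + ω₀ / τ) * lam ℓ + (3 * Ca ^ 2 + 2 * Ca / τ) * lam ℓ := by
              ring_nf
              ring_nf at hAup hquad hh
              linarith
          _ = CB * lam ℓ := by simp only [hCBdef]; ring
      calc (p ℓ).im = Real.sqrt ((p ℓ).im ^ 2) := (Real.sqrt_sq (hb0 ℓ).le).symm
        _ ≤ Real.sqrt (CB * lam ℓ) := Real.sqrt_le_sqrt hbsq
        _ = Real.sqrt CB * Real.sqrt (lam ℓ) := Real.sqrt_mul hCB0 _
    have hblow : c / 2 * Real.sqrt (lam ℓ) ≤ (p ℓ).im := by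
      have h2' : 2 ≤ 3 * τ ^ 2 * c ^ 2 * lam ℓ := by
        rw [div_le_iff₀ (by positivity : (0:ℝ) < 3 * τ ^ 2 * c ^ 2)] at h2; linarith
      have hτinv : τ * τ⁻¹ = 1 := mul_inv_cancel₀ hτ0
      have k1 : 3 * τ ^ 2 * (p ℓ).im ^ 2
          = 3 * τ ^ 2 * A ℓ + 9 * τ ^ 2 * (p ℓ).re ^ 2 + 6 * τ * (p ℓ).re := by
        linear_combination (3 * τ ^ 2) * hb2 ℓ + (6 * τ * (p ℓ).re) * hτinv
      have hAτ : 3 * τ ^ 2 * (c ^ 2 * lam ℓ) ≤ 3 * τ ^ 2 * A ℓ :=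
        mul_le_mul_of_nonneg_left (hAc ℓ) (by positivity)
      have hgoal' : c ^ 2 / 4 * lam ℓ ≤ (p ℓ).im ^ 2 := by
        have h3 : 3 * τ ^ 2 * (c ^ 2 / 4 * lam ℓ) ≤ 3 * τ ^ 2 * ((p ℓ).im ^ 2) := by
          linarith [k1, hAτ, sq_nonneg (3 * τ * (p ℓ).re + 1), h2']
        exact le_of_mul_le_mul_left h3 (by positivity)
      have hbsq2 : (c / 2 * Real.sqrt (lam ℓ)) ^ 2 ≤ (p ℓ).im ^ 2 := by
        have hss : Real.sqrt (lam ℓ) ^ 2 = lam ℓ := Real.sq_sqrt hl0.le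
        calc (c / 2 * Real.sqrt (lam ℓ)) ^ 2 = c ^ 2 / 4 * Real.sqrt (lam ℓ) ^ 2 := by ring
          _ = c ^ 2 / 4 * lam ℓ := by rw [hss]
          _ ≤ (p ℓ).im ^ 2 := hgoal'
      calc c / 2 * Real.sqrt (lam ℓ)
          = Real.sqrt ((c / 2 * Real.sqrt (lam ℓ)) ^ 2) := (Real.sqrt_sq (by positivity)).symm
        _ ≤ Real.sqrt ((p ℓ).im ^ 2) := Real.sqrt_le_sqrt hbsq2
        _ = (p ℓ).im := Real.sqrt_sq (hb0 ℓ).le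
    have hbs : c * Real.sqrt (lam ℓ) ≤ (p ℓ).im + s ℓ := by
      have hsge : c * Real.sqrt (lam ℓ) ≤ s ℓ := by
        have h3 : Real.sqrt (c ^ 2 * lam ℓ) ≤ s ℓ := by
          rw [hsdef]; exact Real.sqrt_le_sqrt (hAc ℓ)
        rwa [Real.sqrt_mul (sq_nonneg c), Real.sqrt_sq hc.le] at h3
      linarith [hb0 ℓ]
    exact ⟨h1, habs, hbb, hblow, hbs, hτD⟩
  -- norm estimates for the explicit error terms
  have hnorm1 : ∀ r q : ℝ, ‖((r : ℝ) : ℂ) * (1 + (q : ℝ) * Complex.I)‖ ≤ |r| * (1 + |q|) := by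
    intro r q
    rw [norm_mul, Complex.norm_real, Real.norm_eq_abs]
    refine mul_le_mul_of_nonneg_left ?_ (abs_nonneg r)
    calc ‖(1 : ℂ) + (q : ℝ) * Complex.I‖
        ≤ ‖(1 : ℂ)‖ + ‖((q : ℝ) : ℂ) * Complex.I‖ := norm_add_le _ _
      _ = 1 + |q| := by
          rw [norm_one, norm_mul, Complex.norm_real, Complex.norm_I, mul_one, Real.norm_eq_abs]
  have hnorm2 : ∀ r w v : ℝ,
      ‖((r : ℝ) : ℂ) * (((w : ℝ) : ℂ) - ((v : ℝ) : ℂ) * Complex.I)‖ ≤ |r| * (|w| + |v|) := by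
    intro r w v
    rw [norm_mul, Complex.norm_real, Real.norm_eq_abs]
    refine mul_le_mul_of_nonneg_left ?_ (abs_nonneg r)
    calc ‖((w : ℝ) : ℂ) - ((v : ℝ) : ℂ) * Complex.I‖
        ≤ ‖((w : ℝ) : ℂ)‖ + ‖((v : ℝ) : ℂ) * Complex.I‖ := norm_sub_le _ _
      _ = |w| + |v| := by
          rw [norm_mul, Complex.norm_real, Complex.norm_real, Complex.norm_I, mul_one,
            Real.norm_eq_abs, Real.norm_eq_abs]
  -- the splitting of p as I * sqrt A + e₁ + e₂
  refine ⟨⟨fun ℓ => ((-ω₀ / (τ * D ℓ) : ℝ) : ℂ)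
      * (1 + ((3 * (p ℓ).re + 2 / τ) / ((p ℓ).im + s ℓ) : ℝ) * Complex.I),
    fun ℓ => ((-(δ * lam ℓ) / (τ * D ℓ) : ℝ) : ℂ)
      * (1 + ((3 * (p ℓ).re + 2 / τ) / ((p ℓ).im + s ℓ) : ℝ) * Complex.I), ?_, ?_, ?_⟩, ?_,
    ⟨fun ℓ => ((-2 / D ℓ : ℝ) : ℂ) * (((p ℓ).re + 1 / τ : ℝ) - ((p ℓ).im : ℝ) * Complex.I),
    fun ℓ => ((2 * δ * lam ℓ / τ / D ℓ : ℝ) : ℂ)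
      * (((p ℓ).re + 1 / τ : ℝ) - ((p ℓ).im : ℝ) * Complex.I), ?_, ?_, ?_⟩⟩
  · -- identity p = I√A + e₁ + e₂
    intro ℓ
    have hbs : 0 < (p ℓ).im + s ℓ := add_pos (hb0 ℓ) (hs0 ℓ)
    have hx : (p ℓ).re = (-ω₀ / (τ * D ℓ)) + (-(δ * lam ℓ) / (τ * D ℓ)) := by
      rw [haval ℓ]; ring
    have hy : (p ℓ).im = s ℓ
        + (p ℓ).re * ((3 * (p ℓ).re + 2 / τ) / ((p ℓ).im + s ℓ)) := by
      have h2 : ((p ℓ).im - s ℓ) * ((p ℓ).im + s ℓ)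
          = (p ℓ).re * (3 * (p ℓ).re + 2 / τ) := by
        linear_combination hb2 ℓ - hsA ℓ
      have h3 : (p ℓ).im - s ℓ = (p ℓ).re * (3 * (p ℓ).re + 2 / τ) / ((p ℓ).im + s ℓ) := by
        rw [eq_div_iff hbs.ne']; linear_combination h2
      rw [mul_div_assoc] at h3
      linarith
    have hsraw : Real.sqrt ((c ^ 2 + δ / τ) * lam ℓ + ω₀ / τ) = s ℓ := by
      simp only [hsdef, hAdef]
    rw [hsraw]
    show p ℓ = Complex.I * ((s ℓ : ℝ) : ℂ)
      + ((-ω₀ / (τ * D ℓ) : ℝ) : ℂ)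
        * (1 + ((3 * (p ℓ).re + 2 / τ) / ((p ℓ).im + s ℓ) : ℝ) * Complex.I)
      + ((-(δ * lam ℓ) / (τ * D ℓ) : ℝ) : ℂ)
        * (1 + ((3 * (p ℓ).re + 2 / τ) / ((p ℓ).im + s ℓ) : ℝ) * Complex.I)
    apply Complex.ext
    · simp only [Complex.add_re, Complex.mul_re, Complex.I_re, Complex.I_im,
        Complex.ofReal_re, Complex.ofReal_im, Complex.one_re, Complex.one_im,
        Complex.add_im, Complex.mul_im]
      rw [hx]; ring
    · simp only [Complex.add_re, Complex.mul_re, Complex.I_re, Complex.I_im,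
        Complex.ofReal_re, Complex.ofReal_im, Complex.one_re, Complex.one_im,
        Complex.add_im, Complex.mul_im]
      linear_combination hy + ((3 * (p ℓ).re + 2 / τ) / ((p ℓ).im + s ℓ)) * hx
  · -- e₁ is big-O
    rw [isBigO_iff]
    refine ⟨Real.sqrt ω₀ * (1 + (3 * Ca + 2 / τ) / c) / (2 * τ ^ 2 * c ^ 2), ?_⟩
    filter_upwards [key] with ℓ hk
    obtain ⟨h1, hxCa, hbb, hblow, hbs, hτD⟩ := hk
    have hl0 : 0 < lam ℓ := hpos ℓ
    have hτD0 : 0 < τ * D ℓ := mul_pos hτ (hD0 ℓ)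
    have hbs0 : 0 < (p ℓ).im + s ℓ := add_pos (hb0 ℓ) (hs0 ℓ)
    have hsl1 : 1 ≤ Real.sqrt (lam ℓ) := by
      have := Real.sqrt_le_sqrt h1; rwa [Real.sqrt_one] at this
    have hKnn : (0:ℝ) ≤ 1 + (3 * Ca + 2 / τ) / c :=
      add_nonneg zero_le_one (div_nonneg h3Ca0 hc.le)
    have hQ : |(3 * (p ℓ).re + 2 / τ) / ((p ℓ).im + s ℓ)| ≤ (3 * Ca + 2 / τ) / c := by
      rw [abs_div, _root_.abs_of_pos hbs0]
      have hnumQ : |3 * (p ℓ).re + 2 / τ| ≤ 3 * Ca + 2 / τ := by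
        have h := abs_le.mp hxCa
        have h2τ : (0:ℝ) < 2 / τ := by positivity
        rw [abs_le]; constructor
        · linarith [h.1]
        · linarith [h.2]
      have hden : c ≤ (p ℓ).im + s ℓ := by
        have hcc : c * 1 ≤ c * Real.sqrt (lam ℓ) := mul_le_mul_of_nonneg_left hsl1 hc.le
        linarith [hbs, hcc]
      exact div_le_div₀ h3Ca0 hnumQ hc hden
    have habs1 : |(-ω₀ / (τ * D ℓ))| = ω₀ / (τ * D ℓ) := by
      rw [abs_div, abs_neg, _root_.abs_of_nonneg hω₀, _root_.abs_of_pos hτD0]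
    have hstep : ω₀ / (τ * D ℓ) ≤ ω₀ / (2 * τ ^ 2 * c ^ 2 * lam ℓ) := by
      calc ω₀ / (τ * D ℓ) = ω₀ * (1 / (τ * D ℓ)) := by ring
        _ ≤ ω₀ * (1 / (2 * τ ^ 2 * c ^ 2 * lam ℓ)) :=
            mul_le_mul_of_nonneg_left (one_div_le_one_div_of_le (by positivity) hτD) hω₀
        _ = ω₀ / (2 * τ ^ 2 * c ^ 2 * lam ℓ) := by ring
    have hrp : (lam ℓ)⁻¹ ≤ lam ℓ ^ (-(1:ℝ)/4) := by
      rw [← Real.rpow_neg_one]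
      exact Real.rpow_le_rpow_of_exponent_le h1 (by norm_num)
    have hsqω : Real.sqrt ω₀ * Real.sqrt ω₀ = ω₀ := Real.mul_self_sqrt hω₀
    have hnormg : ‖Real.sqrt ω₀ * lam ℓ ^ (-(1:ℝ)/4)‖ = Real.sqrt ω₀ * lam ℓ ^ (-(1:ℝ)/4) := by
      rw [Real.norm_eq_abs,
        _root_.abs_of_nonneg (mul_nonneg (Real.sqrt_nonneg _) (Real.rpow_nonneg hl0.le _))]
    calc ‖((-ω₀ / (τ * D ℓ) : ℝ) : ℂ)
          * (1 + ((3 * (p ℓ).re + 2 / τ) / ((p ℓ).im + s ℓ) : ℝ) * Complex.I)‖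
        ≤ |(-ω₀ / (τ * D ℓ))| * (1 + |(3 * (p ℓ).re + 2 / τ) / ((p ℓ).im + s ℓ)|) :=
          hnorm1 _ _
      _ ≤ (ω₀ / (2 * τ ^ 2 * c ^ 2 * lam ℓ)) * (1 + (3 * Ca + 2 / τ) / c) := by
          rw [habs1]
          exact mul_le_mul hstep (by linarith [hQ])
            (by linarith [abs_nonneg ((3 * (p ℓ).re + 2 / τ) / ((p ℓ).im + s ℓ))])
            (div_nonneg hω₀ (by positivity))
      _ ≤ Real.sqrt ω₀ * (1 + (3 * Ca + 2 / τ) / c) / (2 * τ ^ 2 * c ^ 2)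
            * ‖Real.sqrt ω₀ * lam ℓ ^ (-(1:ℝ)/4)‖ := by
          rw [hnormg]
          have hmono : (1 + (3 * Ca + 2 / τ) / c) / (2 * τ ^ 2 * c ^ 2) * ω₀ * (lam ℓ)⁻¹
              ≤ (1 + (3 * Ca + 2 / τ) / c) / (2 * τ ^ 2 * c ^ 2) * ω₀ * (lam ℓ ^ (-(1:ℝ)/4)) :=
            mul_le_mul_of_nonneg_left hrp (mul_nonneg (div_nonneg hKnn (by positivity)) hω₀)
          calc ω₀ / (2 * τ ^ 2 * c ^ 2 * lam ℓ) * (1 + (3 * Ca + 2 / τ) / c)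
              = (1 + (3 * Ca + 2 / τ) / c) / (2 * τ ^ 2 * c ^ 2) * ω₀ * (lam ℓ)⁻¹ := by ring
            _ ≤ (1 + (3 * Ca + 2 / τ) / c) / (2 * τ ^ 2 * c ^ 2) * ω₀
                  * (lam ℓ ^ (-(1:ℝ)/4)) := hmono
            _ = Real.sqrt ω₀ * (1 + (3 * Ca + 2 / τ) / c) / (2 * τ ^ 2 * c ^ 2)
                  * (Real.sqrt ω₀ * lam ℓ ^ (-(1:ℝ)/4)) := by
                linear_combination (-(lam ℓ ^ (-(1:ℝ)/4)) * (1 + (3 * Ca + 2 / τ) / c)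
                  / (2 * τ ^ 2 * c ^ 2)) * hsqω
  · -- e₂ is big-O
    rw [isBigO_iff]
    refine ⟨Real.sqrt δ * (1 + (3 * Ca + 2 / τ) / c) / (2 * τ ^ 2 * c ^ 2), ?_⟩
    filter_upwards [key] with ℓ hk
    obtain ⟨h1, hxCa, hbb, hblow, hbs, hτD⟩ := hk
    have hl0 : 0 < lam ℓ := hpos ℓ
    have hτD0 : 0 < τ * D ℓ := mul_pos hτ (hD0 ℓ)
    have hbs0 : 0 < (p ℓ).im + s ℓ := add_pos (hb0 ℓ) (hs0 ℓ)
    have hsl1 : 1 ≤ Real.sqrt (lam ℓ) := by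
      have := Real.sqrt_le_sqrt h1; rwa [Real.sqrt_one] at this
    have hKnn : (0:ℝ) ≤ 1 + (3 * Ca + 2 / τ) / c :=
      add_nonneg zero_le_one (div_nonneg h3Ca0 hc.le)
    have hQ : |(3 * (p ℓ).re + 2 / τ) / ((p ℓ).im + s ℓ)| ≤ (3 * Ca + 2 / τ) / c := by
      rw [abs_div, _root_.abs_of_pos hbs0]
      have hnumQ : |3 * (p ℓ).re + 2 / τ| ≤ 3 * Ca + 2 / τ := by
        have h := abs_le.mp hxCa
        have h2τ : (0:ℝ) < 2 / τ := by positivity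
        rw [abs_le]; constructor
        · linarith [h.1]
        · linarith [h.2]
      have hden : c ≤ (p ℓ).im + s ℓ := by
        have hcc : c * 1 ≤ c * Real.sqrt (lam ℓ) := mul_le_mul_of_nonneg_left hsl1 hc.le
        linarith [hbs, hcc]
      exact div_le_div₀ h3Ca0 hnumQ hc hden
    have hdl : (0:ℝ) ≤ δ * lam ℓ := mul_nonneg hδ hl0.le
    have habs2 : |(-(δ * lam ℓ) / (τ * D ℓ))| = δ * lam ℓ / (τ * D ℓ) := by
      rw [abs_div, abs_neg, _root_.abs_of_nonneg hdl, _root_.abs_of_pos hτD0]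
    have hstep : δ * lam ℓ / (τ * D ℓ) ≤ δ / (2 * τ ^ 2 * c ^ 2) := by
      calc δ * lam ℓ / (τ * D ℓ) = (δ * lam ℓ) * (1 / (τ * D ℓ)) := by ring
        _ ≤ (δ * lam ℓ) * (1 / (2 * τ ^ 2 * c ^ 2 * lam ℓ)) :=
            mul_le_mul_of_nonneg_left (one_div_le_one_div_of_le (by positivity) hτD) hdl
        _ = δ / (2 * τ ^ 2 * c ^ 2) := by
            field_simp [hl0.ne', hτ0, hc0]
    have hrp4 : 1 ≤ lam ℓ ^ ((1:ℝ)/4) := by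
      have := Real.rpow_le_rpow_of_exponent_le h1 (show (0:ℝ) ≤ 1/4 by norm_num)
      rwa [Real.rpow_zero] at this
    have hsqδ : Real.sqrt δ * Real.sqrt δ = δ := Real.mul_self_sqrt hδ
    have hnormg : ‖Real.sqrt δ * lam ℓ ^ ((1:ℝ)/4)‖ = Real.sqrt δ * lam ℓ ^ ((1:ℝ)/4) := by
      rw [Real.norm_eq_abs,
        _root_.abs_of_nonneg (mul_nonneg (Real.sqrt_nonneg _) (Real.rpow_nonneg hl0.le _))]
    calc ‖((-(δ * lam ℓ) / (τ * D ℓ) : ℝ) : ℂ)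
          * (1 + ((3 * (p ℓ).re + 2 / τ) / ((p ℓ).im + s ℓ) : ℝ) * Complex.I)‖
        ≤ |(-(δ * lam ℓ) / (τ * D ℓ))|
            * (1 + |(3 * (p ℓ).re + 2 / τ) / ((p ℓ).im + s ℓ)|) := hnorm1 _ _
      _ ≤ (δ / (2 * τ ^ 2 * c ^ 2)) * (1 + (3 * Ca + 2 / τ) / c) := by
          rw [habs2]
          exact mul_le_mul hstep (by linarith [hQ])
            (by linarith [abs_nonneg ((3 * (p ℓ).re + 2 / τ) / ((p ℓ).im + s ℓ))])
            (div_nonneg hδ (by positivity))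
      _ ≤ Real.sqrt δ * (1 + (3 * Ca + 2 / τ) / c) / (2 * τ ^ 2 * c ^ 2)
            * ‖Real.sqrt δ * lam ℓ ^ ((1:ℝ)/4)‖ := by
          rw [hnormg]
          have hmono : (1 + (3 * Ca + 2 / τ) / c) / (2 * τ ^ 2 * c ^ 2) * δ * 1
              ≤ (1 + (3 * Ca + 2 / τ) / c) / (2 * τ ^ 2 * c ^ 2) * δ * (lam ℓ ^ ((1:ℝ)/4)) :=
            mul_le_mul_of_nonneg_left hrp4 (mul_nonneg (div_nonneg hKnn (by positivity)) hδ)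
          calc δ / (2 * τ ^ 2 * c ^ 2) * (1 + (3 * Ca + 2 / τ) / c)
              = (1 + (3 * Ca + 2 / τ) / c) / (2 * τ ^ 2 * c ^ 2) * δ * 1 := by ring
            _ ≤ (1 + (3 * Ca + 2 / τ) / c) / (2 * τ ^ 2 * c ^ 2) * δ
                  * (lam ℓ ^ ((1:ℝ)/4)) := hmono
            _ = Real.sqrt δ * (1 + (3 * Ca + 2 / τ) / c) / (2 * τ ^ 2 * c ^ 2)
                  * (Real.sqrt δ * lam ℓ ^ ((1:ℝ)/4)) := by
                linear_combination (-(lam ℓ ^ ((1:ℝ)/4)) * (1 + (3 * Ca + 2 / τ) / c)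
                  / (2 * τ ^ 2 * c ^ 2)) * hsqδ
  · -- 1/p is big-O
    rw [isBigO_iff]
    refine ⟨2 / c, ?_⟩
    filter_upwards [key] with ℓ hk
    obtain ⟨h1, hxCa, hbb, hblow, hbs, hτD⟩ := hk
    have hl0 : 0 < lam ℓ := hpos ℓ
    have hslpos : 0 < Real.sqrt (lam ℓ) := Real.sqrt_pos.mpr hl0
    have hpn : c / 2 * Real.sqrt (lam ℓ) ≤ ‖p ℓ‖ := by
      calc c / 2 * Real.sqrt (lam ℓ) ≤ (p ℓ).im := hblow
        _ ≤ |(p ℓ).im| := le_abs_self _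
        _ ≤ ‖p ℓ‖ := Complex.abs_im_le_norm _
        _ = ‖p ℓ‖ := rfl
    have hhalf : lam ℓ ^ (-(1:ℝ)/2) = (Real.sqrt (lam ℓ))⁻¹ := by
      rw [show (-(1:ℝ)/2) = -(1/2:ℝ) by norm_num, Real.rpow_neg hl0.le, ← Real.sqrt_eq_rpow]
    have hng : ‖lam ℓ ^ (-(1:ℝ)/2)‖ = lam ℓ ^ (-(1:ℝ)/2) := by
      rw [Real.norm_eq_abs, _root_.abs_of_nonneg (Real.rpow_nonneg hl0.le _)]
    have hnorm1p : ‖1 / p ℓ‖ = ‖p ℓ‖⁻¹ := by rw [one_div, norm_inv]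
    rw [hnorm1p, hng, hhalf]
    calc ‖p ℓ‖⁻¹ ≤ (c / 2 * Real.sqrt (lam ℓ))⁻¹ :=
          inv_anti₀ (by positivity) hpn
      _ = 2 / c * (Real.sqrt (lam ℓ))⁻¹ := by rw [mul_inv, inv_div]
  · -- identity for p^2
    intro ℓ
    have H1 : (p ℓ).im * (p ℓ).im = A ℓ + (p ℓ).re * (3 * (p ℓ).re + 2 / τ) := by
      linear_combination hb2 ℓ
    have hDinv : D ℓ * (D ℓ)⁻¹ = 1 := mul_inv_cancel₀ (hD0 ℓ).ne'
    have hAeq : A ℓ = (c ^ 2 + δ / τ) * lam ℓ + ω₀ / τ := by simp [hAdef]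
    apply Complex.ext
    · simp only [pow_two, Complex.add_re, Complex.mul_re, Complex.I_re, Complex.I_im,
        Complex.ofReal_re, Complex.ofReal_im, Complex.one_re, Complex.one_im,
        Complex.add_im, Complex.mul_im, Complex.sub_re, Complex.sub_im,
        Complex.neg_re, Complex.neg_im]
      linear_combination (-1 : ℝ) * H1 + (-2 * ((p ℓ).re + 1 / τ) * (D ℓ)⁻¹) * haD ℓ
        + (2 * (p ℓ).re * ((p ℓ).re + 1 / τ)) * hDinv + (-1 : ℝ) * hAeq
    · simp only [pow_two, Complex.add_re, Complex.mul_re, Complex.I_re, Complex.I_im,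
        Complex.ofReal_re, Complex.ofReal_im, Complex.one_re, Complex.one_im,
        Complex.add_im, Complex.mul_im, Complex.sub_re, Complex.sub_im,
        Complex.neg_re, Complex.neg_im]
      linear_combination (2 * (p ℓ).im * (D ℓ)⁻¹) * haD ℓ + (-2 * (p ℓ).re * (p ℓ).im) * hDinv
  · -- e₃ is big-O
    rw [isBigO_iff]
    refine ⟨(Ca + 1 / τ + Real.sqrt CB) / (τ * c ^ 2), ?_⟩
    filter_upwards [key] with ℓ hk
    obtain ⟨h1, hxCa, hbb, hblow, hbs, hτD⟩ := hk
    have hl0 : 0 < lam ℓ := hpos ℓ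
    have hτD0 : 0 < τ * D ℓ := mul_pos hτ (hD0 ℓ)
    have hbs0 : 0 < (p ℓ).im + s ℓ := add_pos (hb0 ℓ) (hs0 ℓ)
    have hsl1 : 1 ≤ Real.sqrt (lam ℓ) := by
      have := Real.sqrt_le_sqrt h1; rwa [Real.sqrt_one] at this
    have hKnn : (0:ℝ) ≤ 1 + (3 * Ca + 2 / τ) / c :=
      add_nonneg zero_le_one (div_nonneg h3Ca0 hc.le)
    have hQ : |(3 * (p ℓ).re + 2 / τ) / ((p ℓ).im + s ℓ)| ≤ (3 * Ca + 2 / τ) / c := by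
      rw [abs_div, _root_.abs_of_pos hbs0]
      have hnumQ : |3 * (p ℓ).re + 2 / τ| ≤ 3 * Ca + 2 / τ := by
        have h := abs_le.mp hxCa
        have h2τ : (0:ℝ) < 2 / τ := by positivity
        rw [abs_le]; constructor
        · linarith [h.1]
        · linarith [h.2]
      have hden : c ≤ (p ℓ).im + s ℓ := by
        have hcc : c * 1 ≤ c * Real.sqrt (lam ℓ) := mul_le_mul_of_nonneg_left hsl1 hc.le
        linarith [hbs, hcc]
      exact div_le_div₀ h3Ca0 hnumQ hc hden
    have hXbound : |(p ℓ).re + 1 / τ| + |(p ℓ).im|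
        ≤ (Ca + 1 / τ + Real.sqrt CB) * Real.sqrt (lam ℓ) := by
      have h6 : |(p ℓ).re + 1 / τ| ≤ Ca + 1 / τ := by
        have h := abs_le.mp hxCa
        have h1τ : (0:ℝ) < 1 / τ := by positivity
        rw [abs_le]; constructor
        · linarith [h.1]
        · linarith [h.2]
      have h7 : |(p ℓ).im| = (p ℓ).im := _root_.abs_of_pos (hb0 ℓ)
      have h8 : (0:ℝ) ≤ Ca + 1 / τ := add_nonneg hCa0 (by positivity)
      have h9 : (Ca + 1 / τ) * 1 ≤ (Ca + 1 / τ) * Real.sqrt (lam ℓ) :=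
        mul_le_mul_of_nonneg_left hsl1 h8
      have h10 := hbb
      rw [h7]
      nlinarith [h6, h9, h10]
    have hXnn : (0:ℝ) ≤ |(p ℓ).re + 1 / τ| + |(p ℓ).im| :=
      add_nonneg (abs_nonneg _) (abs_nonneg _)
    have hCXnn : (0:ℝ) ≤ Ca + 1 / τ + Real.sqrt CB :=
      add_nonneg (add_nonneg hCa0 (by positivity)) (Real.sqrt_nonneg _)
    have hsqmul : ∀ t L : ℝ, t * t = L → 0 < t → t * L⁻¹ = t⁻¹ := by
      intro t L h ht
      rw [← h, mul_inv, ← mul_assoc, mul_inv_cancel₀ ht.ne', one_mul]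
    have hslinv : Real.sqrt (lam ℓ) * (lam ℓ)⁻¹ = (Real.sqrt (lam ℓ))⁻¹ :=
      hsqmul _ _ (Real.mul_self_sqrt hl0.le) (Real.sqrt_pos.mpr hl0)
    have hhalf : lam ℓ ^ (-(1:ℝ)/2) = (Real.sqrt (lam ℓ))⁻¹ := by
      rw [show (-(1:ℝ)/2) = -(1/2:ℝ) by norm_num, Real.rpow_neg hl0.le, ← Real.sqrt_eq_rpow]
    have hng : ‖lam ℓ ^ (-(1:ℝ)/2)‖ = lam ℓ ^ (-(1:ℝ)/2) := by
      rw [Real.norm_eq_abs, _root_.abs_of_nonneg (Real.rpow_nonneg hl0.le _)]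
    have hre3 : |(-2 / D ℓ)| = 2 / D ℓ := by
      rw [abs_div, abs_neg, _root_.abs_of_pos (hD0 ℓ)]
      norm_num
    have h9 : 2 / D ℓ ≤ 1 / (τ * c ^ 2 * lam ℓ) := by
      rw [div_le_div_iff₀ (hD0 ℓ) (by positivity)]
      nlinarith [hτD, hτ]
    rw [hng]
    calc ‖((-2 / D ℓ : ℝ) : ℂ) * (((p ℓ).re + 1 / τ : ℝ) - ((p ℓ).im : ℝ) * Complex.I)‖
        ≤ |(-2 / D ℓ)| * (|(p ℓ).re + 1 / τ| + |(p ℓ).im|) := hnorm2 _ _ _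
      _ ≤ (1 / (τ * c ^ 2 * lam ℓ)) * ((Ca + 1 / τ + Real.sqrt CB) * Real.sqrt (lam ℓ)) := by
          rw [hre3]
          exact mul_le_mul h9 hXbound hXnn (by positivity)
      _ = (Ca + 1 / τ + Real.sqrt CB) / (τ * c ^ 2) * (Real.sqrt (lam ℓ) * (lam ℓ)⁻¹) := by
          ring
      _ = (Ca + 1 / τ + Real.sqrt CB) / (τ * c ^ 2) * (lam ℓ ^ (-(1:ℝ)/2)) := by
          rw [hslinv, hhalf]
  · -- e₄ is big-O
    rw [isBigO_iff]
    refine ⟨(Ca + 1 / τ + Real.sqrt CB) / (τ ^ 2 * c ^ 2), ?_⟩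
    filter_upwards [key] with ℓ hk
    obtain ⟨h1, hxCa, hbb, hblow, hbs, hτD⟩ := hk
    have hl0 : 0 < lam ℓ := hpos ℓ
    have hτD0 : 0 < τ * D ℓ := mul_pos hτ (hD0 ℓ)
    have hbs0 : 0 < (p ℓ).im + s ℓ := add_pos (hb0 ℓ) (hs0 ℓ)
    have hsl1 : 1 ≤ Real.sqrt (lam ℓ) := by
      have := Real.sqrt_le_sqrt h1; rwa [Real.sqrt_one] at this
    have hKnn : (0:ℝ) ≤ 1 + (3 * Ca + 2 / τ) / c :=
      add_nonneg zero_le_one (div_nonneg h3Ca0 hc.le)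
    have hQ : |(3 * (p ℓ).re + 2 / τ) / ((p ℓ).im + s ℓ)| ≤ (3 * Ca + 2 / τ) / c := by
      rw [abs_div, _root_.abs_of_pos hbs0]
      have hnumQ : |3 * (p ℓ).re + 2 / τ| ≤ 3 * Ca + 2 / τ := by
        have h := abs_le.mp hxCa
        have h2τ : (0:ℝ) < 2 / τ := by positivity
        rw [abs_le]; constructor
        · linarith [h.1]
        · linarith [h.2]
      have hden : c ≤ (p ℓ).im + s ℓ := by
        have hcc : c * 1 ≤ c * Real.sqrt (lam ℓ) := mul_le_mul_of_nonneg_left hsl1 hc.le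
        linarith [hbs, hcc]
      exact div_le_div₀ h3Ca0 hnumQ hc hden
    have hXbound : |(p ℓ).re + 1 / τ| + |(p ℓ).im|
        ≤ (Ca + 1 / τ + Real.sqrt CB) * Real.sqrt (lam ℓ) := by
      have h6 : |(p ℓ).re + 1 / τ| ≤ Ca + 1 / τ := by
        have h := abs_le.mp hxCa
        have h1τ : (0:ℝ) < 1 / τ := by positivity
        rw [abs_le]; constructor
        · linarith [h.1]
        · linarith [h.2]
      have h7 : |(p ℓ).im| = (p ℓ).im := _root_.abs_of_pos (hb0 ℓ)
      have h8 : (0:ℝ) ≤ Ca + 1 / τ := add_nonneg hCa0 (by positivity)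
      have h9 : (Ca + 1 / τ) * 1 ≤ (Ca + 1 / τ) * Real.sqrt (lam ℓ) :=
        mul_le_mul_of_nonneg_left hsl1 h8
      have h10 := hbb
      rw [h7]
      nlinarith [h6, h9, h10]
    have hXnn : (0:ℝ) ≤ |(p ℓ).re + 1 / τ| + |(p ℓ).im| :=
      add_nonneg (abs_nonneg _) (abs_nonneg _)
    have hCXnn : (0:ℝ) ≤ Ca + 1 / τ + Real.sqrt CB :=
      add_nonneg (add_nonneg hCa0 (by positivity)) (Real.sqrt_nonneg _)
    have hsqmul : ∀ t L : ℝ, t * t = L → 0 < t → t * L⁻¹ = t⁻¹ := by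
      intro t L h ht
      rw [← h, mul_inv, ← mul_assoc, mul_inv_cancel₀ ht.ne', one_mul]
    have hslinv : Real.sqrt (lam ℓ) * (lam ℓ)⁻¹ = (Real.sqrt (lam ℓ))⁻¹ :=
      hsqmul _ _ (Real.mul_self_sqrt hl0.le) (Real.sqrt_pos.mpr hl0)
    have hdl : (0:ℝ) ≤ 2 * δ * lam ℓ := by positivity
    have habs4 : |(2 * δ * lam ℓ / τ / D ℓ)| = 2 * δ * lam ℓ / τ / D ℓ := by
      rw [_root_.abs_of_nonneg (div_nonneg (div_nonneg hdl hτ.le) (hD0 ℓ).le)]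
    have hstep : 2 * δ * lam ℓ / τ / D ℓ ≤ δ / (τ ^ 2 * c ^ 2) := by
      calc 2 * δ * lam ℓ / τ / D ℓ = (2 * δ * lam ℓ) * (1 / (τ * D ℓ)) := by ring
        _ ≤ (2 * δ * lam ℓ) * (1 / (2 * τ ^ 2 * c ^ 2 * lam ℓ)) :=
            mul_le_mul_of_nonneg_left (one_div_le_one_div_of_le (by positivity) hτD) hdl
        _ = δ / (τ ^ 2 * c ^ 2) := by
            field_simp [hl0.ne', hτ0, hc0]
    have hsqrtr : lam ℓ ^ ((1:ℝ)/2) = Real.sqrt (lam ℓ) := (Real.sqrt_eq_rpow _).symm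
    have hng : ‖δ * lam ℓ ^ ((1:ℝ)/2)‖ = δ * lam ℓ ^ ((1:ℝ)/2) := by
      rw [Real.norm_eq_abs,
        _root_.abs_of_nonneg (mul_nonneg hδ (Real.rpow_nonneg hl0.le _))]
    rw [hng, hsqrtr]
    calc ‖((2 * δ * lam ℓ / τ / D ℓ : ℝ) : ℂ)
          * (((p ℓ).re + 1 / τ : ℝ) - ((p ℓ).im : ℝ) * Complex.I)‖
        ≤ |(2 * δ * lam ℓ / τ / D ℓ)| * (|(p ℓ).re + 1 / τ| + |(p ℓ).im|) := hnorm2 _ _ _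
      _ ≤ (δ / (τ ^ 2 * c ^ 2)) * ((Ca + 1 / τ + Real.sqrt CB) * Real.sqrt (lam ℓ)) := by
          rw [habs4]
          exact mul_le_mul hstep hXbound hXnn (div_nonneg hδ (by positivity))
      _ = (Ca + 1 / τ + Real.sqrt CB) / (τ ^ 2 * c ^ 2) * (δ * Real.sqrt (lam ℓ)) := by
          ring
end

section
/- Let τ > 0, c > 0, δ > 0 and let p = p(λ, τ, δ) with Re(p) < 0 be a root of τp³ + p² + (τc²+δ)λp + c²λ = 0 depending smoothly on (δ, τ). If δ ≤ 2τc², then ∂/∂τ(−Re(p)) < 0; i.e., increasing the relaxation time τ above the threshold δ/(2c²) decreases the distance of the pole from the imaginary axis. -/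
set_option maxHeartbeats 1000000


/-- increasing the relaxation time `τ` above the threshold `δ/(2c²)`
decreases the distance of the pole from the imaginary axis. -/
theorem stmt10 (c lam δ : ℝ) (hc : 0 < c) (hlam : 0 < lam) (hδ : 0 < δ)
    (τ0 : ℝ) (hτ0 : 0 < τ0)
    (r θ : ℝ → ℝ)  -- polar coordinates of the root as functions of τ
    (hr : DifferentiableAt ℝ r τ0) (hθ : DifferentiableAt ℝ θ τ0)
    (hrpos : 0 < r τ0)
    (hRe : r τ0 * Real.cos (θ τ0) < 0)  -- Re p < 0
    (hsin : Real.sin (θ τ0) ≠ 0)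
    -- the polar-coordinate form of `τp³ + p² + (τc²+δ)λp + c²λ = 0` holds for all τ
    (heqRe : ∀ τ, τ * (r τ) ^ 3 * Real.cos (3 * θ τ) + (r τ) ^ 2 * Real.cos (2 * θ τ)
        + (τ * c ^ 2 + δ) * lam * r τ * Real.cos (θ τ) + c ^ 2 * lam = 0)
    (heqIm : ∀ τ, τ * (r τ) ^ 3 * Real.sin (3 * θ τ) + (r τ) ^ 2 * Real.sin (2 * θ τ)
        + (τ * c ^ 2 + δ) * lam * r τ * Real.sin (θ τ) = 0)
    -- nondegeneracy of the Jacobian of the implicit function theorem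
    (hJac : (3 * τ0 * (r τ0) ^ 2 * Real.cos (3 * θ τ0) + 2 * r τ0 * Real.cos (2 * θ τ0)
          + (τ0 * c ^ 2 + δ) * lam * Real.cos (θ τ0)) ^ 2
        + (3 * τ0 * (r τ0) ^ 2 * Real.sin (3 * θ τ0) + 2 * r τ0 * Real.sin (2 * θ τ0)
          + (τ0 * c ^ 2 + δ) * lam * Real.sin (θ τ0)) ^ 2 ≠ 0)
    (hthreshold : δ ≤ 2 * τ0 * c ^ 2) :
    deriv (fun τ => -(r τ * Real.cos (θ τ))) τ0 < 0 := by
  have hC : Real.cos (θ τ0) < 0 := by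
    rcases mul_neg_iff.mp hRe with ⟨_, h⟩ | ⟨h, _⟩
    · exact h
    · linarith
  have hC2 : 0 < Real.cos (θ τ0) ^ 2 := by nlinarith [mul_pos_of_neg_of_neg hC hC]
  have hS2 : 0 < Real.sin (θ τ0) ^ 2 := by rcases hsin.lt_or_gt with h | h <;> nlinarith
  have hr' : HasDerivAt r (deriv r τ0) τ0 := hr.hasDerivAt
  have hθ' : HasDerivAt θ (deriv θ τ0) τ0 := hθ.hasDerivAt
  have hid : HasDerivAt (fun x : ℝ => x) 1 τ0 := hasDerivAt_id τ0
  have hr3 : HasDerivAt (fun τ => r τ ^ 3) (3 * r τ0 ^ 2 * deriv r τ0) τ0 := by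
    simpa using hr'.fun_pow 3
  have hr2 : HasDerivAt (fun τ => r τ ^ 2) (2 * r τ0 * deriv r τ0) τ0 := by
    simpa using hr'.fun_pow 2
  have h3θ : HasDerivAt (fun τ => 3 * θ τ) (3 * deriv θ τ0) τ0 := hθ'.const_mul 3
  have h2θ : HasDerivAt (fun τ => 2 * θ τ) (2 * deriv θ τ0) τ0 := hθ'.const_mul 2
  have hlin : HasDerivAt (fun τ : ℝ => (τ * c ^ 2 + δ) * lam) (1 * c ^ 2 * lam) τ0 :=
    ((hid.mul_const (c ^ 2)).add_const δ).mul_const lam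
  -- derivative of the real-part equation
  have hF := (((hid.fun_mul hr3).fun_mul h3θ.cos).add (hr2.fun_mul h2θ.cos)).add
      ((hlin.fun_mul hr').fun_mul hθ'.cos) |>.add_const (c ^ 2 * lam)
  have hFd : deriv (fun τ => τ * (r τ) ^ 3 * Real.cos (3 * θ τ) + (r τ) ^ 2 * Real.cos (2 * θ τ)
      + (τ * c ^ 2 + δ) * lam * r τ * Real.cos (θ τ) + c ^ 2 * lam) τ0 = _ := hF.deriv
  rw [funext heqRe] at hFd
  simp only [deriv_const'] at hFd
  have d1 := hFd.symm
  -- derivative of the imaginary-part equation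
  have hG := (((hid.fun_mul hr3).fun_mul h3θ.sin).add (hr2.fun_mul h2θ.sin)).add
      ((hlin.fun_mul hr').fun_mul hθ'.sin)
  have hGd : deriv (fun τ => τ * (r τ) ^ 3 * Real.sin (3 * θ τ) + (r τ) ^ 2 * Real.sin (2 * θ τ)
      + (τ * c ^ 2 + δ) * lam * r τ * Real.sin (θ τ)) τ0 = _ := hG.deriv
  rw [funext heqIm] at hGd
  simp only [deriv_const'] at hGd
  have d2 := hGd.symm
  -- rewrite the goal derivative
  have hgd : deriv (fun τ => -(r τ * Real.cos (θ τ))) τ0 = _ := ((hr'.fun_mul hθ'.cos).neg).deriv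
  rw [hgd]
  -- equations at τ0 and trig expansions
  have e1 := heqRe τ0
  have e2 := heqIm τ0
  rw [Real.cos_three_mul, Real.cos_two_mul] at e1
  rw [Real.sin_three_mul, Real.sin_two_mul] at e2
  rw [Real.cos_three_mul, Real.cos_two_mul, Real.sin_three_mul, Real.sin_two_mul] at hJac
  rw [Real.cos_three_mul, Real.cos_two_mul, Real.sin_three_mul, Real.sin_two_mul] at d1
  rw [Real.cos_three_mul, Real.cos_two_mul, Real.sin_three_mul, Real.sin_two_mul] at d2
  have hP : Real.sin (θ τ0) ^ 2 + Real.cos (θ τ0) ^ 2 = 1 := Real.sin_sq_add_cos_sq _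
  set R := r τ0 with hRdef
  set C := Real.cos (θ τ0) with hCdef
  set S := Real.sin (θ τ0) with hSdef
  set Rp := deriv r τ0 with hRpdef
  set Tp := deriv θ τ0 with hTpdef
  -- divide the imaginary-part equation by R*S
  have hRS : R * S ≠ 0 := mul_ne_zero (ne_of_gt hrpos) hsin
  have e2' : τ0 * R ^ 2 * (3 - 4 * S ^ 2) + 2 * R * C + (τ0 * c ^ 2 + δ) * lam = 0 := by
    apply mul_left_cancel₀ hRS
    linear_combination e2
  -- |p|² = c²λ + 2τ r³ cosθ  (Viète-type relation)
  have hK : c ^ 2 * lam = R ^ 2 + 2 * τ0 * R ^ 3 * C := by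
    linear_combination e1 - R * C * e2' - 4 * τ0 * R ^ 3 * C * hP
  -- Jacobian is positive
  have hJ : 0 < (3 * τ0 * R ^ 2 * (4 * C ^ 3 - 3 * C) + 2 * R * (2 * C ^ 2 - 1)
        + (τ0 * c ^ 2 + δ) * lam * C) ^ 2
      + (3 * τ0 * R ^ 2 * (3 * S - 4 * S ^ 3) + 2 * R * (2 * S * C)
        + (τ0 * c ^ 2 + δ) * lam * S) ^ 2 :=
    lt_of_le_of_ne (by positivity) (Ne.symm hJac)
  -- the key implicit-differentiation identity
  have key : ((3 * τ0 * R ^ 2 * (4 * C ^ 3 - 3 * C) + 2 * R * (2 * C ^ 2 - 1)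
        + (τ0 * c ^ 2 + δ) * lam * C) ^ 2
      + (3 * τ0 * R ^ 2 * (3 * S - 4 * S ^ 3) + 2 * R * (2 * S * C)
        + (τ0 * c ^ 2 + δ) * lam * S) ^ 2) * (Rp * C - R * S * Tp)
      = -(8 * R ^ 4 * S ^ 2 * (τ0 ^ 2 * R ^ 2 * C ^ 2 + τ0 * R * C * (2 * C ^ 2 + 1) + C ^ 2)) := by
    linear_combination
      (C * (3 * τ0 * R ^ 2 * (4 * C ^ 3 - 3 * C) + 2 * R * (2 * C ^ 2 - 1)
          + (τ0 * c ^ 2 + δ) * lam * C)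
        + S * (3 * τ0 * R ^ 2 * (3 * S - 4 * S ^ 3) + 2 * R * (2 * S * C)
          + (τ0 * c ^ 2 + δ) * lam * S)) * d1
      + (C * (3 * τ0 * R ^ 2 * (3 * S - 4 * S ^ 3) + 2 * R * (2 * S * C)
          + (τ0 * c ^ 2 + δ) * lam * S)
        - S * (3 * τ0 * R ^ 2 * (4 * C ^ 3 - 3 * C) + 2 * R * (2 * C ^ 2 - 1)
          + (τ0 * c ^ 2 + δ) * lam * C)) * d2
      + (-(R * C * S ^ 2 * (c ^ 2 * lam)) - R * C ^ 3 * (c ^ 2 * lam) + 3 * R ^ 3 * C * S ^ 2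
          + 3 * R ^ 3 * C ^ 3 - 4 * R ^ 3 * C ^ 3 * S ^ 2 - 4 * R ^ 3 * C ^ 5) * e2'
      + (-(2 * R ^ 2 * S ^ 2) + 2 * R ^ 2 * C ^ 2 - 2 * R ^ 2 * C ^ 2 * S ^ 2
          - 2 * R ^ 2 * C ^ 4 - 24 * τ0 * R ^ 3 * C * S ^ 2 + 20 * τ0 * R ^ 3 * C * S ^ 4
          + 12 * τ0 * R ^ 3 * C ^ 3 + 8 * τ0 * R ^ 3 * C ^ 3 * S ^ 2
          - 12 * τ0 * R ^ 3 * C ^ 5) * hK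
      + (8 * R ^ 4 * S ^ 2 + 4 * R ^ 4 * C ^ 2 - 8 * R ^ 4 * C ^ 4
          + 56 * τ0 * R ^ 5 * C * S ^ 2 - 48 * τ0 * R ^ 5 * C * S ^ 4
          + 20 * τ0 * R ^ 5 * C ^ 3 + 32 * τ0 * R ^ 5 * C ^ 3 * S ^ 2
          - 48 * τ0 * R ^ 5 * C ^ 5 + 40 * τ0 ^ 2 * R ^ 6 * C ^ 2 * S ^ 2
          - 24 * τ0 ^ 2 * R ^ 6 * C ^ 4) * hP
  clear d1 d2 hF hG hFd hGd hr' hθ' hid hr3 hr2 h3θ h2θ hlin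
  set Jv := (3 * τ0 * R ^ 2 * (4 * C ^ 3 - 3 * C) + 2 * R * (2 * C ^ 2 - 1)
        + (τ0 * c ^ 2 + δ) * lam * C) ^ 2
      + (3 * τ0 * R ^ 2 * (3 * S - 4 * S ^ 3) + 2 * R * (2 * S * C)
        + (τ0 * c ^ 2 + δ) * lam * S) ^ 2 with hJvdef
  -- threshold condition gives the sign certificate
  have h1 : δ * lam ≤ 2 * τ0 * c ^ 2 * lam := by nlinarith [hthreshold, hlam]
  have hh2 : 2 * R * (3 * τ0 ^ 2 * R ^ 2 * C + τ0 * R * (1 + 2 * C ^ 2) + C)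
      = 3 * τ0 * (c ^ 2 * lam) - (τ0 * c ^ 2 + δ) * lam := by
    linear_combination (-3) * τ0 * hK + e2' + 4 * τ0 * R ^ 2 * hP
  have hh : 0 ≤ 3 * τ0 ^ 2 * R ^ 2 * C + τ0 * R * (1 + 2 * C ^ 2) + C := by
    by_contra hcon
    push_neg at hcon
    linarith [mul_pos hrpos (neg_pos.mpr hcon), hh2, h1]
  have h3 : C * (3 * τ0 ^ 2 * R ^ 2 * C + τ0 * R * (1 + 2 * C ^ 2) + C) ≤ 0 := by
    nlinarith [hh, hC]
  have hq : τ0 ^ 2 * R ^ 2 * C ^ 2 + τ0 * R * C * (2 * C ^ 2 + 1) + C ^ 2 < 0 := by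
    nlinarith [h3, mul_pos (mul_pos (mul_pos hτ0 hτ0) (mul_pos hrpos hrpos)) hC2]
  have hJX : 0 < Jv * (Rp * C - R * S * Tp) := by
    rw [key]
    linarith [mul_pos (mul_pos (pow_pos hrpos 4) hS2) (neg_pos.mpr hq)]
  have hX : 0 < Rp * C - R * S * Tp := by
    by_contra hcon
    push_neg at hcon
    linarith [mul_nonneg hJ.le (neg_nonneg.mpr hcon), hJX]
  linarith [hX]
end
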